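/- If the prior hyperparameters are constants λₙ = μ₀ and κₙ = σ₀ > 0 independent of n, then with τ₀ ∈ (−1,1) the Bayes factor BF₀₁(n) of Theorem 1 tends to +∞ when Tₙ is bounded, and tends to 0 when Tₙ = (3/2)√n·Δ + Rₙ with fixed Δ ∈ (−1−τ₀, 1−τ₀)\{0} and Rₙ bounded. -/

import Mathlib

open Real MeasureTheory Filter Topology

noncomputable def phi (x : ℝ) : ℝ := (Real.sqrt (2 * Real.pi))⁻¹ * Real.exp (-x ^ 2 / 2)
noncomputable def Phi (x : ℝ) : ℝ := ∫ t in Set.Iic x, phi t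

lemma phi_eq : phi = ProbabilityTheory.gaussianPDFReal 0 1 := by
  ext x
  simp [phi, ProbabilityTheory.gaussianPDFReal, mul_comm]

lemma phi_pos (x : ℝ) : 0 < phi x := by
  rw [phi_eq]; exact ProbabilityTheory.gaussianPDFReal_pos 0 1 x one_ne_zero

lemma phi_integrable : Integrable phi := by
  rw [phi_eq]; exact ProbabilityTheory.integrable_gaussianPDFReal 0 1

lemma phi_integral : ∫ x, phi x = 1 := by
  rw [phi_eq]; exact ProbabilityTheory.integral_gaussianPDFReal_eq_one 0 one_ne_zero

lemma Phi_nonneg (x : ℝ) : 0 ≤ Phi x :=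
  setIntegral_nonneg measurableSet_Iic fun t _ => (phi_pos t).le

lemma Phi_le_one (x : ℝ) : Phi x ≤ 1 := by
  rw [← phi_integral]
  exact setIntegral_le_integral phi_integrable (Filter.Eventually.of_forall fun t => (phi_pos t).le)

lemma Phi_lt (a b : ℝ) (h : a < b) : Phi a < Phi b := by
  have h1 : Phi b - Phi a = ∫ t in Set.Ioc a b, phi t := by
    unfold Phi
    rw [← Set.Iic_union_Ioc_eq_Iic h.le, setIntegral_union (by rw [Set.disjoint_left]; rintro t (ht : t ≤ a) ⟨h1, h2⟩; linarith)
      measurableSet_Ioc (phi_integrable.integrableOn) (phi_integrable.integrableOn)]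
    ring
  have h2 : 0 < ∫ t in Set.Ioc a b, phi t := by
    apply setIntegral_pos_iff_support_of_nonneg_ae ?_ ?_ |>.mpr
    · simp [Function.support, fun t => (phi_pos t).ne', Real.volume_Ioc, h]
    · exact Filter.Eventually.of_forall fun t => (phi_pos t).le
    · exact phi_integrable.integrableOn
  linarith

lemma Phi_tendsto_atTop : Tendsto Phi atTop (𝓝 1) := by
  rw [← phi_integral]
  exact (MeasureTheory.aecover_Iic tendsto_id).integral_tendsto_of_countably_generated
    phi_integrable

lemma Phi_tendsto_atBot : Tendsto Phi atBot (𝓝 0) := by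
  have h : Tendsto (fun x : ℝ => ∫ t in Set.Ioi x, phi t) atBot (𝓝 1) := by
    rw [← phi_integral]
    exact (MeasureTheory.aecover_Ioi tendsto_id).integral_tendsto_of_countably_generated
      phi_integrable
  have heq : ∀ x : ℝ, Phi x = 1 - ∫ t in Set.Ioi x, phi t := by
    intro x
    have := MeasureTheory.integral_add_compl (measurableSet_Iic (a := x)) phi_integrable
    rw [Set.compl_Iic] at this
    rw [← phi_integral]
    unfold Phi; linarith
  have hfun : Phi = fun x => 1 - ∫ t in Set.Ioi x, phi t := funext heq
  rw [hfun]
  have h2 := (tendsto_const_nhds (x := (1:ℝ)) (f := atBot)).sub h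
  rw [sub_self] at h2
  exact h2

lemma Phi_mono : Monotone Phi := fun a b h => by
  rcases eq_or_lt_of_le h with rfl | h
  · exact le_rfl
  · exact (Phi_lt a b h).le

lemma sqrt_tendsto_atTop : Tendsto Real.sqrt atTop atTop := by
  rw [tendsto_atTop]
  intro b
  filter_upwards [eventually_ge_atTop (b ^ 2)] with x hx
  calc b ≤ |b| := le_abs_self b
  _ = Real.sqrt (b ^ 2) := (Real.sqrt_sq_eq_abs b).symm
  _ ≤ Real.sqrt x := Real.sqrt_le_sqrt hx

lemma aux_decay (c₀ d K : ℝ) (hc₀ : 0 ≤ c₀) (hd : 0 < d) :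
    Tendsto (fun s : ℝ => (c₀ * s + 1) * Real.exp (-(s * d - K) ^ 2 / 2)) atTop (𝓝 0) := by
  have hb : Tendsto (fun s : ℝ => s * d) atTop atTop := tendsto_id.atTop_mul_const hd
  have ha : Tendsto (fun x : ℝ => x * Real.exp (-x)) atTop (𝓝 0) := by
    simpa using tendsto_pow_mul_exp_neg_atTop_nhds_zero 1
  have hexp : Tendsto (fun s : ℝ => Real.exp (-(s * d))) atTop (𝓝 0) :=
    Real.tendsto_exp_neg_atTop_nhds_zero.comp hb
  have h1 : Tendsto (fun s : ℝ => Real.exp K * ((c₀ / d) * ((s * d) * Real.exp (-(s * d)))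
      + Real.exp (-(s * d)))) atTop (𝓝 0) := by
    have := (((ha.comp hb).const_mul (c₀ / d)).add hexp).const_mul (Real.exp K)
    simpa using this
  apply tendsto_of_tendsto_of_tendsto_of_le_of_le' tendsto_const_nhds h1
  · filter_upwards [eventually_ge_atTop (0 : ℝ)] with s hs
    positivity
  · filter_upwards [eventually_ge_atTop ((K + 2) / d), eventually_ge_atTop (0 : ℝ)] with s hs hs0
    have ht : 2 ≤ s * d - K := by
      rw [div_le_iff₀ hd] at hs
      linarith
    have hkey : Real.exp (-(s * d - K) ^ 2 / 2) ≤ Real.exp K * Real.exp (-(s * d)) := by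
      rw [← Real.exp_add]
      apply Real.exp_le_exp.mpr
      nlinarith
    calc (c₀ * s + 1) * Real.exp (-(s * d - K) ^ 2 / 2)
        ≤ (c₀ * s + 1) * (Real.exp K * Real.exp (-(s * d))) := by
          apply mul_le_mul_of_nonneg_left hkey (by positivity)
      _ = Real.exp K * ((c₀ / d) * ((s * d) * Real.exp (-(s * d))) + Real.exp (-(s * d))) := by
          field_simp

theorem stmt_18 (τ₀ μ₀ σ₀ : ℝ) (hτ : τ₀ ∈ Set.Ioo (-1 : ℝ) 1) (hσ₀ : 0 < σ₀)
    (lam kap : ℕ → ℝ)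
    (hlam : ∀ n : ℕ, lam n = μ₀) (hkap : ∀ n : ℕ, kap n = σ₀)
    (T : ℕ → ℝ) (μ σ BF : ℕ → ℝ)
    (hμ : ∀ n : ℕ, μ n = ((3 * Real.sqrt n / 2) * T n + lam n / kap n ^ 2) /
        (9 * (n : ℝ) / 4 + 1 / kap n ^ 2))
    (hσ : ∀ n : ℕ, σ n = (9 * (n : ℝ) / 4 + 1 / kap n ^ 2) ^ (-(1 : ℝ) / 2))
    (hBF : ∀ n : ℕ, BF n =
        Real.sqrt (9 * (n : ℝ) * kap n ^ 2 / 4 + 1) *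
          Real.exp ((1 / 2) * (lam n ^ 2 / kap n ^ 2 - μ n ^ 2 / σ n ^ 2)) *
          ((Phi ((1 - τ₀ - μ n) / σ n) - Phi ((-1 - τ₀ - μ n) / σ n)) /
            (Phi ((1 - τ₀ - lam n) / kap n) - Phi ((-1 - τ₀ - lam n) / kap n)))) :
    ((∃ M : ℝ, ∀ n, |T n| ≤ M) → Tendsto BF atTop atTop) ∧
    (∀ Δ : ℝ, -1 - τ₀ < Δ → Δ < 1 - τ₀ → Δ ≠ 0 →
      ∀ R : ℕ → ℝ, (∃ M : ℝ, ∀ n, |R n| ≤ M) →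
        (∀ n : ℕ, T n = (3 / 2) * Real.sqrt n * Δ + R n) →
        Tendsto BF atTop (nhds 0)) := by
  obtain ⟨hτ1, hτ2⟩ := hτ
  have hσ₀2 : (0:ℝ) < σ₀ ^ 2 := by positivity
  set c : ℝ := 1 / σ₀ ^ 2 with hc
  have hc0 : 0 < c := by rw [hc]; positivity
  set q : ℕ → ℝ := fun n => 9 * (n:ℝ) / 4 + c with hqdef
  have hq0 : ∀ n, 0 < q n := by
    intro n
    have hn : (0:ℝ) ≤ (n:ℝ) := Nat.cast_nonneg n
    show 0 < 9 * (n:ℝ) / 4 + c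
    linarith
  have hqs0 : ∀ n, 0 < Real.sqrt (q n) := fun n => Real.sqrt_pos.mpr (hq0 n)
  have hσ' : ∀ n, σ n = (Real.sqrt (q n))⁻¹ := by
    intro n
    rw [hσ n, hkap n, ← hc]
    show (q n) ^ (-(1:ℝ)/2) = (Real.sqrt (q n))⁻¹
    rw [show (-(1:ℝ)/2) = -(1/2 : ℝ) by norm_num, Real.rpow_neg (hq0 n).le,
      ← Real.sqrt_eq_rpow]
  set B : ℕ → ℝ := fun n => 3 * Real.sqrt n / 2 * T n + μ₀ / σ₀ ^ 2 with hBdef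
  have hμ' : ∀ n, μ n = B n / q n := by
    intro n
    rw [hμ n, hlam n, hkap n, ← hc]
  have hsσ2 : ∀ n, σ n ^ 2 = (q n)⁻¹ := by
    intro n
    rw [hσ' n, inv_pow, Real.sq_sqrt (hq0 n).le]
  have hratio : ∀ n, μ n ^ 2 / σ n ^ 2 = B n ^ 2 / q n := by
    intro n
    have h0 := (hq0 n).ne'
    rw [hμ' n, hsσ2 n]
    field_simp
  have hdiv : ∀ (n : ℕ) (x : ℝ), x / σ n = x * Real.sqrt (q n) := by
    intro n x
    rw [hσ' n, div_eq_mul_inv, inv_inv]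
  set D : ℝ := Phi ((1 - τ₀ - μ₀) / σ₀) - Phi ((-1 - τ₀ - μ₀) / σ₀) with hDdef
  have hD : 0 < D := by
    apply sub_pos.mpr
    apply Phi_lt
    apply div_lt_div_of_pos_right ?_ hσ₀
    linarith
  have hBF' : ∀ n, BF n = Real.sqrt (9 * n * σ₀ ^ 2 / 4 + 1) *
      Real.exp ((1/2) * (μ₀ ^ 2 / σ₀ ^ 2 - B n ^ 2 / q n)) *
      ((Phi ((1 - τ₀ - μ n) * Real.sqrt (q n)) -
        Phi ((-1 - τ₀ - μ n) * Real.sqrt (q n))) / D) := by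
    intro n
    rw [hBF n, hlam n, hkap n, hratio n, hdiv n (1 - τ₀ - μ n), hdiv n (-1 - τ₀ - μ n)]
  have hqtop : Tendsto (fun n : ℕ => Real.sqrt (q n)) atTop atTop := by
    apply sqrt_tendsto_atTop.comp
    apply tendsto_atTop_mono _ tendsto_natCast_atTop_atTop
    intro n
    have hn : (0:ℝ) ≤ (n:ℝ) := Nat.cast_nonneg n
    show (n:ℝ) ≤ 9 * (n:ℝ) / 4 + c
    linarith
  have hStop : Tendsto (fun n : ℕ => Real.sqrt (9 * n * σ₀ ^ 2 / 4 + 1)) atTop atTop := by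
    apply sqrt_tendsto_atTop.comp
    apply tendsto_atTop_mono _
      (tendsto_natCast_atTop_atTop.atTop_mul_const (show (0:ℝ) < 9 * σ₀ ^ 2 / 4 by positivity))
    intro n
    show (n:ℝ) * (9 * σ₀ ^ 2 / 4) ≤ 9 * n * σ₀ ^ 2 / 4 + 1
    ring_nf
    linarith
  have hsqc : 0 < Real.sqrt c := Real.sqrt_pos.mpr hc0
  have h32 : ∀ n : ℕ, 3 * Real.sqrt n / 2 ≤ Real.sqrt (q n) := by
    intro n
    have hsn : (0:ℝ) ≤ Real.sqrt n := Real.sqrt_nonneg _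
    rw [show Real.sqrt (q n) = Real.sqrt (9 * (n:ℝ) / 4 + c) from rfl]
    rw [Real.le_sqrt (by positivity) (hq0 n).le]
    have hsn2 : Real.sqrt (n:ℝ) ^ 2 = (n:ℝ) := Real.sq_sqrt (Nat.cast_nonneg n)
    have hqn : q n = 9 * (n:ℝ) / 4 + c := rfl
    nlinarith [hc0]
  have hcle : ∀ n : ℕ, Real.sqrt c ≤ Real.sqrt (q n) := by
    intro n
    apply Real.sqrt_le_sqrt
    have hn : (0:ℝ) ≤ (n:ℝ) := Nat.cast_nonneg n
    show c ≤ 9 * (n:ℝ) / 4 + c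
    linarith
  have habs_bound : ∀ (G : ℕ → ℝ) (M' C' : ℝ), 0 ≤ M' → (∀ n : ℕ, |G n| ≤ M') →
      ∀ n : ℕ, |3 * Real.sqrt (n:ℝ) / 2 * G n + C'| ≤ (M' + |C'| / Real.sqrt c) * Real.sqrt (q n) := by
    intro G M' C' hM' hG n
    have hsn : (0:ℝ) ≤ Real.sqrt n := Real.sqrt_nonneg _
    have h1 := h32 n
    have h2 := hcle n
    have h3 : |C'| / Real.sqrt c * Real.sqrt c = |C'| := div_mul_cancel₀ _ hsqc.ne'
    have h4 : |3 * Real.sqrt n / 2 * G n + C'| ≤ 3 * Real.sqrt n / 2 * M' + |C'| := by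
      calc |3 * Real.sqrt n / 2 * G n + C'| ≤ |3 * Real.sqrt n / 2 * G n| + |C'| := abs_add_le _ _
        _ = 3 * Real.sqrt n / 2 * |G n| + |C'| := by
            rw [abs_mul, abs_of_nonneg (by positivity : (0:ℝ) ≤ 3 * Real.sqrt n / 2)]
        _ ≤ 3 * Real.sqrt n / 2 * M' + |C'| := by nlinarith [hG n]
    have h5 : 0 ≤ |C'| / Real.sqrt c := by positivity
    nlinarith [mul_nonneg hM' (sub_nonneg.mpr h1), mul_nonneg h5 (sub_nonneg.mpr h2)]
  constructor
  · rintro ⟨M, hM⟩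
    have hM0 : 0 ≤ M := (abs_nonneg _).trans (hM 0)
    set K : ℝ := M + |μ₀ / σ₀ ^ 2| / Real.sqrt c with hK
    have hBb : ∀ n, |B n| ≤ K * Real.sqrt (q n) := fun n => habs_bound T M _ hM0 hM n
    have hE : ∀ n, B n ^ 2 / q n ≤ K ^ 2 := by
      intro n
      rw [div_le_iff₀ (hq0 n)]
      have h : B n ^ 2 ≤ (K * Real.sqrt (q n)) ^ 2 := by
        rw [← sq_abs (B n)]
        exact pow_le_pow_left₀ (abs_nonneg _) (hBb n) 2
      calc B n ^ 2 ≤ (K * Real.sqrt (q n)) ^ 2 := h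
        _ = K ^ 2 * q n := by rw [mul_pow, Real.sq_sqrt (hq0 n).le]
    have hμs : ∀ n, μ n * Real.sqrt (q n) = B n / Real.sqrt (q n) := by
      intro n
      rw [hμ' n, div_mul_eq_mul_div, div_eq_div_iff (hq0 n).ne' (hqs0 n).ne']
      linear_combination B n * Real.mul_self_sqrt (hq0 n).le
    have hμb : ∀ n, |μ n * Real.sqrt (q n)| ≤ K := by
      intro n
      rw [hμs n, abs_div, abs_of_nonneg (hqs0 n).le, div_le_iff₀ (hqs0 n)]
      exact hBb n
    have hu : Tendsto (fun n => (1 - τ₀ - μ n) * Real.sqrt (q n)) atTop atTop := by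
      have h1 : Tendsto (fun n : ℕ => (1 - τ₀) * Real.sqrt (q n) + -K) atTop atTop :=
        tendsto_atTop_add_const_right _ _ (hqtop.const_mul_atTop (by linarith))
      apply tendsto_atTop_mono _ h1
      intro n
      have h2 := (abs_le.mp (hμb n)).2
      have h3 : (1 - τ₀ - μ n) * Real.sqrt (q n)
          = (1 - τ₀) * Real.sqrt (q n) - μ n * Real.sqrt (q n) := by ring
      rw [h3]; linarith
    have hl : Tendsto (fun n => (-1 - τ₀ - μ n) * Real.sqrt (q n)) atTop atBot := by
      have h1 : Tendsto (fun n : ℕ => (-1 - τ₀) * Real.sqrt (q n) + K) atTop atBot := by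
        apply tendsto_atBot_add_const_right
        exact (tendsto_const_mul_atBot_of_neg (by linarith)).mpr hqtop
      apply tendsto_atBot_mono _ h1
      intro n
      have h2 := (abs_le.mp (hμb n)).1
      have h3 : (-1 - τ₀ - μ n) * Real.sqrt (q n)
          = (-1 - τ₀) * Real.sqrt (q n) - μ n * Real.sqrt (q n) := by ring
      rw [h3]; linarith
    have hN : Tendsto (fun n => Phi ((1 - τ₀ - μ n) * Real.sqrt (q n)) -
        Phi ((-1 - τ₀ - μ n) * Real.sqrt (q n))) atTop (𝓝 1) := by
      have h := (Phi_tendsto_atTop.comp hu).sub (Phi_tendsto_atBot.comp hl)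
      rw [sub_zero] at h
      exact h
    have hNev : ∀ᶠ n in atTop, 1/2 ≤ Phi ((1 - τ₀ - μ n) * Real.sqrt (q n)) -
        Phi ((-1 - τ₀ - μ n) * Real.sqrt (q n)) :=
      hN.eventually (eventually_ge_nhds (by norm_num))
    have hcst : (0:ℝ) < Real.exp ((1/2) * (μ₀ ^ 2 / σ₀ ^ 2 - K ^ 2)) * (1/2 / D) := by
      apply mul_pos (Real.exp_pos _)
      positivity
    have hmain : Tendsto (fun n : ℕ => Real.sqrt (9 * n * σ₀ ^ 2 / 4 + 1) *
        (Real.exp ((1/2) * (μ₀ ^ 2 / σ₀ ^ 2 - K ^ 2)) * (1/2 / D))) atTop atTop :=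
      hStop.atTop_mul_const hcst
    apply tendsto_atTop_mono' atTop ?_ hmain
    filter_upwards [hNev] with n hn
    rw [hBF' n]
    have hEn : Real.exp ((1/2) * (μ₀ ^ 2 / σ₀ ^ 2 - K ^ 2))
        ≤ Real.exp ((1/2) * (μ₀ ^ 2 / σ₀ ^ 2 - B n ^ 2 / q n)) := by
      apply Real.exp_le_exp.mpr
      have := hE n
      linarith
    have hhalf : 1/2 / D ≤ (Phi ((1 - τ₀ - μ n) * Real.sqrt (q n)) -
        Phi ((-1 - τ₀ - μ n) * Real.sqrt (q n))) / D := div_le_div_of_nonneg_right hn hD.le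
    calc Real.sqrt (9 * n * σ₀ ^ 2 / 4 + 1) *
        (Real.exp ((1/2) * (μ₀ ^ 2 / σ₀ ^ 2 - K ^ 2)) * (1/2 / D))
        = Real.sqrt (9 * n * σ₀ ^ 2 / 4 + 1) *
          Real.exp ((1/2) * (μ₀ ^ 2 / σ₀ ^ 2 - K ^ 2)) * (1/2 / D) := by ring
      _ ≤ Real.sqrt (9 * n * σ₀ ^ 2 / 4 + 1) *
          Real.exp ((1/2) * (μ₀ ^ 2 / σ₀ ^ 2 - B n ^ 2 / q n)) *
          ((Phi ((1 - τ₀ - μ n) * Real.sqrt (q n)) -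
            Phi ((-1 - τ₀ - μ n) * Real.sqrt (q n))) / D) := by
          apply mul_le_mul
          · exact mul_le_mul le_rfl hEn (Real.exp_pos _).le (Real.sqrt_nonneg _)
          · exact hhalf
          · positivity
          · exact mul_nonneg (Real.sqrt_nonneg _) (Real.exp_pos _).le
  · rintro Δ hΔl hΔr hΔ0 R ⟨M, hMR⟩ hT
    have hM0 : 0 ≤ M := (abs_nonneg _).trans (hMR 0)
    set d : ℝ := |Δ| with hdd
    have hd0 : 0 < d := abs_pos.mpr hΔ0
    set K : ℝ := M + |μ₀ / σ₀ ^ 2 - c * Δ| / Real.sqrt c with hK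
    have hK0 : 0 ≤ K := by
      rw [hK]
      positivity
    have hBq : ∀ n, |B n - q n * Δ| ≤ K * Real.sqrt (q n) := by
      intro n
      have hnn : Real.sqrt (n:ℝ) * Real.sqrt (n:ℝ) = (n:ℝ) := Real.mul_self_sqrt (Nat.cast_nonneg n)
      have heq : B n - q n * Δ = 3 * Real.sqrt n / 2 * R n + (μ₀ / σ₀ ^ 2 - c * Δ) := by
        show 3 * Real.sqrt n / 2 * T n + μ₀ / σ₀ ^ 2 - (9 * (n:ℝ)/4 + c) * Δ = _
        rw [hT n]
        linear_combination (9 * Δ / 4) * hnn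
      rw [heq]
      exact habs_bound R M _ hM0 hMR n
    have hev : ∀ᶠ n in atTop, K ≤ Real.sqrt (q n) * d := by
      filter_upwards [hqtop.eventually_ge_atTop (K / d)] with n hn
      rw [div_le_iff₀ hd0] at hn
      exact hn
    have hBlow : ∀ᶠ n in atTop, (Real.sqrt (q n) * d - K) ^ 2 ≤ B n ^ 2 / q n := by
      filter_upwards [hev] with n hn
      have h1 := hBq n
      have h4 : q n = Real.sqrt (q n) * Real.sqrt (q n) := (Real.mul_self_sqrt (hq0 n).le).symm
      have habs : Real.sqrt (q n) * (Real.sqrt (q n) * d - K) ≤ |B n| := by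
        have h2 : |q n * Δ| - |B n - q n * Δ| ≤ |B n| := by
          have h2a := abs_sub_abs_le_abs_sub (q n * Δ) (B n)
          rw [abs_sub_comm] at h2a
          linarith
        have h3 : |q n * Δ| = q n * d := by rw [abs_mul, abs_of_pos (hq0 n)]
        nlinarith
      have h5 : 0 ≤ Real.sqrt (q n) * d - K := by linarith
      have h6 : (Real.sqrt (q n) * (Real.sqrt (q n) * d - K)) ^ 2 ≤ B n ^ 2 := by
        rw [← sq_abs (B n)]
        exact pow_le_pow_left₀ (by positivity) habs 2
      rw [le_div_iff₀ (hq0 n)]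
      calc (Real.sqrt (q n) * d - K) ^ 2 * q n
          = (Real.sqrt (q n) * (Real.sqrt (q n) * d - K)) ^ 2 := by
            rw [mul_pow, Real.sq_sqrt (hq0 n).le]; ring
        _ ≤ B n ^ 2 := h6
    have hG : Tendsto (fun n : ℕ => (σ₀ * Real.sqrt (q n) + 1) *
        Real.exp (-(Real.sqrt (q n) * d - K) ^ 2 / 2) *
        (Real.exp ((1/2) * (μ₀ ^ 2 / σ₀ ^ 2)) / D)) atTop (𝓝 0) := by
      have h0 := ((aux_decay σ₀ d K hσ₀.le hd0).comp hqtop).mul_const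
        (Real.exp ((1/2) * (μ₀ ^ 2 / σ₀ ^ 2)) / D)
      simpa using h0
    apply tendsto_of_tendsto_of_tendsto_of_le_of_le' tendsto_const_nhds hG
    · apply Filter.Eventually.of_forall
      intro n
      rw [hBF' n]
      have hul : Phi ((-1 - τ₀ - μ n) * Real.sqrt (q n))
          ≤ Phi ((1 - τ₀ - μ n) * Real.sqrt (q n)) := by
        apply Phi_mono
        apply mul_le_mul_of_nonneg_right ?_ (hqs0 n).le
        linarith
      exact mul_nonneg (mul_nonneg (Real.sqrt_nonneg _) (Real.exp_pos _).le)
        (div_nonneg (sub_nonneg.mpr hul) hD.le)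
    · filter_upwards [hBlow] with n hn
      rw [hBF' n]
      have hA0 : (0:ℝ) ≤ σ₀ * Real.sqrt (q n) + 1 := by
        have := mul_pos hσ₀ (hqs0 n)
        linarith
      have hS : Real.sqrt (9 * n * σ₀ ^ 2 / 4 + 1) ≤ σ₀ * Real.sqrt (q n) + 1 := by
        have hσc : σ₀ ^ 2 * c = 1 := by rw [hc]; field_simp
        have hsq : Real.sqrt (q n) ^ 2 = q n := Real.sq_sqrt (hq0 n).le
        have hqn : q n = 9 * (n:ℝ) / 4 + c := rfl
        have h3 : σ₀ ^ 2 * Real.sqrt (q n) ^ 2 = 9 * (n:ℝ) * σ₀ ^ 2 / 4 + 1 := by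
          rw [hsq, hqn]
          linear_combination hσc
        have h4 : (σ₀ * Real.sqrt (q n) + 1) ^ 2
            = σ₀ ^ 2 * Real.sqrt (q n) ^ 2 + 2 * (σ₀ * Real.sqrt (q n)) + 1 := by ring
        have h2 : 9 * (n:ℝ) * σ₀ ^ 2 / 4 + 1 ≤ (σ₀ * Real.sqrt (q n) + 1) ^ 2 := by
          linarith [mul_pos hσ₀ (hqs0 n)]
        calc Real.sqrt (9 * (n:ℝ) * σ₀ ^ 2 / 4 + 1)
            ≤ Real.sqrt ((σ₀ * Real.sqrt (q n) + 1) ^ 2) := Real.sqrt_le_sqrt h2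
          _ = σ₀ * Real.sqrt (q n) + 1 := Real.sqrt_sq hA0
      have hEb : Real.exp ((1/2) * (μ₀ ^ 2 / σ₀ ^ 2 - B n ^ 2 / q n))
          ≤ Real.exp (-(Real.sqrt (q n) * d - K) ^ 2 / 2) *
            Real.exp ((1/2) * (μ₀ ^ 2 / σ₀ ^ 2)) := by
        rw [← Real.exp_add]
        apply Real.exp_le_exp.mpr
        linarith
      have hN0 : 0 ≤ Phi ((1 - τ₀ - μ n) * Real.sqrt (q n)) -
          Phi ((-1 - τ₀ - μ n) * Real.sqrt (q n)) := by
        apply sub_nonneg.mpr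
        apply Phi_mono
        apply mul_le_mul_of_nonneg_right ?_ (hqs0 n).le
        linarith
      have hN1 : Phi ((1 - τ₀ - μ n) * Real.sqrt (q n)) -
          Phi ((-1 - τ₀ - μ n) * Real.sqrt (q n)) ≤ 1 := by
        have := Phi_le_one ((1 - τ₀ - μ n) * Real.sqrt (q n))
        have := Phi_nonneg ((-1 - τ₀ - μ n) * Real.sqrt (q n))
        linarith
      calc Real.sqrt (9 * n * σ₀ ^ 2 / 4 + 1) *
            Real.exp ((1/2) * (μ₀ ^ 2 / σ₀ ^ 2 - B n ^ 2 / q n)) *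
            ((Phi ((1 - τ₀ - μ n) * Real.sqrt (q n)) -
              Phi ((-1 - τ₀ - μ n) * Real.sqrt (q n))) / D)
          ≤ ((σ₀ * Real.sqrt (q n) + 1) *
              (Real.exp (-(Real.sqrt (q n) * d - K) ^ 2 / 2) *
                Real.exp ((1/2) * (μ₀ ^ 2 / σ₀ ^ 2)))) * (1 / D) := by
            apply mul_le_mul
            · exact mul_le_mul hS hEb (Real.exp_pos _).le hA0
            · exact div_le_div_of_nonneg_right hN1 hD.le
            · exact div_nonneg hN0 hD.le
            · exact mul_nonneg hA0 (by positivity)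
        _ = (σ₀ * Real.sqrt (q n) + 1) *
            Real.exp (-(Real.sqrt (q n) * d - K) ^ 2 / 2) *
            (Real.exp ((1/2) * (μ₀ ^ 2 / σ₀ ^ 2)) / D) := by ring
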